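/- Let m ≥ 1, let V = ℝ^{m+1} with its standard inner product, and let e₀, e₁, …, e_m be an orthonormal basis of V. Let U be the hyperplane of V orthogonal to e₀ (the span of e₁, …, e_m). Then for every unit vector u ∈ U there exists an index i ∈ {1, …, m} and a sign ε ∈ {+1, −1} such that: for every unit vector x ∈ V with ⟨x, eᵢ⟩ > √((m−1)/m), one has ⟨x, ε·u⟩ > 0. (In particular, some coordinate of u satisfies |⟨u, eᵢ⟩| ≥ 1/√m, and any unit vectors x, u with ⟨x, eᵢ⟩ > √((m−1)/m) and ⟨u, eᵢ⟩ ≥ 1/√m satisfy ⟨x, u⟩ > 0.) -/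
import Mathlib


open scoped RealInnerProductSpace
set_option maxHeartbeats 1000000

theorem hyperplane_separation_example (m : ℕ) (hm : 1 ≤ m)
    (u : EuclideanSpace ℝ (Fin (m + 1)))
    (hu_mem : ⟪u, EuclideanSpace.single (0 : Fin (m + 1)) (1 : ℝ)⟫ = 0)
    (hu_norm : ‖u‖ = 1) :
    ∃ i : Fin (m + 1), i ≠ 0 ∧ ∃ ε : ℝ, (ε = 1 ∨ ε = -1) ∧
      ∀ x : EuclideanSpace ℝ (Fin (m + 1)), ‖x‖ = 1 →
        Real.sqrt (((m : ℝ) - 1) / m) < ⟪x, EuclideanSpace.single i (1 : ℝ)⟫ →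
        0 < ⟪x, ε • u⟫ := by
  have hm' : (0 : ℝ) < m := by exact_mod_cast hm
  have hu0 : u 0 = 0 := by
    simpa [EuclideanSpace.inner_single_right] using hu_mem
  -- sum of squares of u is 1
  have husq : ∑ j, (u j) ^ 2 = 1 := by
    have h := hu_norm
    rw [EuclideanSpace.norm_eq] at h
    have h2 : Real.sqrt (∑ j, ‖u j‖ ^ 2) = 1 := h
    have := congrArg (· ^ 2) h2
    simp only [one_pow] at this
    rw [Real.sq_sqrt (by positivity)] at this
    simpa [Real.norm_eq_abs, sq_abs] using this
  -- sum over nonzero indices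
  set s : Finset (Fin (m + 1)) := Finset.univ.erase 0 with hs
  have hcard : s.card = m := by simp [hs]
  have hsum : ∑ j ∈ s, (u j) ^ 2 = 1 := by
    rw [hs, Finset.sum_erase_eq_sub (Finset.mem_univ 0), hu0]
    simpa using husq
  -- exists i with u i ^ 2 ≥ 1/m
  have hex : ∃ i ∈ s, 1 / (m : ℝ) ≤ (u i) ^ 2 := by
    by_contra h
    push_neg at h
    have : ∑ j ∈ s, (u j) ^ 2 < ∑ j ∈ s, 1 / (m : ℝ) := by
      apply Finset.sum_lt_sum_of_nonempty
      · rw [← Finset.card_pos, hcard]; omega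
      · exact h
    rw [hsum, Finset.sum_const, hcard, nsmul_eq_mul] at this
    rw [mul_one_div, div_self (ne_of_gt hm')] at this
    exact lt_irrefl _ this
  obtain ⟨i, his, hi⟩ := hex
  have hine : i ≠ 0 := Finset.ne_of_mem_erase his
  refine ⟨i, hine, if 0 ≤ u i then 1 else -1, by split <;> simp, ?_⟩
  intro x hx hxi
  set ε : ℝ := if 0 ≤ u i then 1 else -1 with hε
  have hεui : ε * u i = |u i| := by
    rw [hε]
    rcases le_or_gt 0 (u i) with h | h
    · rw [if_pos h, one_mul, abs_of_nonneg h]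
    · rw [if_neg (not_le.mpr h), abs_of_neg h]; ring
  have hε2 : ε ^ 2 = 1 := by rw [hε]; split <;> norm_num
  -- inner product formula
  have hinner : ⟪x, ε • u⟫ = ∑ j, x j * (ε * u j) := by
    rw [real_inner_smul_right, PiLp.inner_apply]
    rw [Finset.mul_sum]
    congr 1; ext j
    simp [RCLike.inner_apply]
    ring
  have hxi' : Real.sqrt (((m : ℝ) - 1) / m) < x i := by
    simpa [EuclideanSpace.inner_single_right] using hxi
  have hxsq : ∑ j, (x j) ^ 2 = 1 := by
    have h := hx
    rw [EuclideanSpace.norm_eq] at h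
    have := congrArg (· ^ 2) h
    simp only [one_pow] at this
    rw [Real.sq_sqrt (by positivity)] at this
    simpa [Real.norm_eq_abs, sq_abs] using this
  -- key quantities
  have hxipos : 0 < x i := lt_of_le_of_lt (Real.sqrt_nonneg _) hxi'
  have hm1 : (1 : ℝ) ≤ m := by exact_mod_cast hm
  have hdiv : (0 : ℝ) ≤ ((m : ℝ) - 1) / m := div_nonneg (by linarith) (le_of_lt hm')
  have hxi2 : ((m : ℝ) - 1) / m < (x i) ^ 2 := by
    have h1 : Real.sqrt (((m : ℝ) - 1) / m) ^ 2 < (x i) ^ 2 := by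
      apply sq_lt_sq' _ hxi'
      linarith [Real.sqrt_nonneg (((m : ℝ) - 1) / m)]
    rwa [Real.sq_sqrt hdiv] at h1
  have hA : ∑ j ∈ Finset.univ.erase i, (x j) ^ 2 = 1 - (x i) ^ 2 := by
    rw [Finset.sum_erase_eq_sub (Finset.mem_univ i)]; rw [hxsq]
  have hB : ∑ j ∈ Finset.univ.erase i, (ε * u j) ^ 2 = 1 - (u i) ^ 2 := by
    have : ∀ j, (ε * u j) ^ 2 = (u j) ^ 2 := by
      intro j; rw [mul_pow, hε2, one_mul]
    simp_rw [this]
    rw [Finset.sum_erase_eq_sub (Finset.mem_univ i)]; rw [husq]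
  have hAnn : (0 : ℝ) ≤ 1 - (x i) ^ 2 := by
    rw [← hA]; positivity
  have hBnn : (0 : ℝ) ≤ 1 - (u i) ^ 2 := by
    rw [← hB]; positivity
  -- Cauchy-Schwarz on the rest
  have hCS : (∑ j ∈ Finset.univ.erase i, x j * (ε * u j)) ^ 2
      ≤ (1 - (x i) ^ 2) * (1 - (u i) ^ 2) := by
    rw [← hA, ← hB]
    exact Finset.sum_mul_sq_le_sq_mul_sq _ _ _
  -- the main product term
  have hab : 0 < x i * (ε * u i) := by
    rw [hεui]
    have hui : 0 < |u i| := by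
      rw [← Real.sqrt_sq_eq_abs]
      apply Real.sqrt_pos.mpr
      have : (0:ℝ) < 1 / m := by positivity
      linarith
    exact mul_pos hxipos hui
  have hkey : (1 - (x i) ^ 2) * (1 - (u i) ^ 2) < (x i * (ε * u i)) ^ 2 := by
    have h1 : (x i * (ε * u i)) ^ 2 = (x i) ^ 2 * (u i) ^ 2 := by
      rw [mul_pow, mul_pow, hε2]; ring
    rw [h1]
    have h2 : (m : ℝ) - 1 < (x i) ^ 2 * m := (div_lt_iff₀ hm').mp hxi2
    have h3 : (1 : ℝ) ≤ (u i) ^ 2 * m := (div_le_iff₀ hm').mp hi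
    have h4 : (1 : ℝ) < (x i) ^ 2 + (u i) ^ 2 := by nlinarith
    nlinarith
  -- conclude
  rw [hinner, ← Finset.add_sum_erase _ _ (Finset.mem_univ i)]
  have habs : |∑ j ∈ Finset.univ.erase i, x j * (ε * u j)| < x i * (ε * u i) := by
    rw [← Real.sqrt_sq_eq_abs]
    rw [Real.sqrt_lt' hab]
    exact lt_of_le_of_lt hCS hkey
  have := neg_lt_of_abs_lt habs
  linarith
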